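/- Let c : ℕ → ℝ be a sequence of coefficients with c_0 = 0 such that the power series ∑_{j≥1} c_j t^j has positive radius of convergence R, and let f(t) = exp(∑_{j=1}^∞ c_j t^j) for |t| < R. Let x be a real number and k a positive integer. Then, as r tends to 1 from the right, the infinite product over n = 1, 2, 3, … of [ f((r^k − 1)^{1/k} · x / r^n) divided by ∏_{i=1}^{k−1} exp(c_i · ((r^k − 1)^{1/k} · x / r^n)^i) ] tends to exp(c_k · x^k). -/

import Mathlib

open Filter Topology

set_option maxHeartbeats 2000000 in
/-- Let `c : ℕ → ℝ` with `c 0 = 0` be such that `∑_{j≥1} c_j t^j` converges for `|t| < R`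
(with `R > 0`), and let `f t = exp (∑' j, c j * t ^ j)`. Then for any real `x` and any
positive integer `k`, as `r → 1⁺`, the infinite product over `n = 1, 2, 3, …` of
`f ((r^k − 1)^(1/k) * x / r^n) / ∏_{i=1}^{k−1} exp (c i * ((r^k − 1)^(1/k) * x / r^n)^i)`
tends to `exp (c k * x ^ k)`. -/
theorem tendsto_component_extraction
    (c : ℕ → ℝ) (hc0 : c 0 = 0) (R : ℝ) (hR : 0 < R)
    (hsum : ∀ t : ℝ, |t| < R → Summable fun j : ℕ => c j * t ^ j)
    (f : ℝ → ℝ) (hf : ∀ t : ℝ, |t| < R → f t = Real.exp (∑' j : ℕ, c j * t ^ j))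
    (x : ℝ) (k : ℕ) (hk : 0 < k) :
    Tendsto
      (fun r : ℝ =>
        ∏' n : ℕ,
          (f ((r ^ k - 1) ^ ((1 : ℝ) / k) * x / r ^ (n + 1)) /
            ∏ i ∈ Finset.Ioo 0 k,
              Real.exp (c i * ((r ^ k - 1) ^ ((1 : ℝ) / k) * x / r ^ (n + 1)) ^ i)))
      (𝓝[>] (1 : ℝ)) (𝓝 (Real.exp (c k * x ^ k))) := by
  set ρ : ℝ := R / 2 with hρdef
  have hρ0 : 0 < ρ := by positivity
  have hρR : |ρ| < R := by rw [abs_of_pos hρ0]; rw [hρdef]; linarith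
  -- a uniform bound `|c j| ≤ M / ρ ^ j`
  obtain ⟨M, hM⟩ : ∃ M : ℝ, ∀ j, |c j * ρ ^ j| ≤ M := by
    have h1 : Tendsto (fun j => |c j * ρ ^ j|) atTop (𝓝 0) := by
      simpa using (hsum ρ hρR).tendsto_atTop_zero.abs
    obtain ⟨M, hM⟩ := h1.bddAbove_range
    exact ⟨M, fun j => hM ⟨j, rfl⟩⟩
  have hM0 : 0 ≤ M := le_trans (abs_nonneg _) (hM 0)
  have hMc : ∀ j : ℕ, |c j| ≤ M / ρ ^ j := by
    intro j
    rw [le_div_iff₀ (by positivity)]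
    simpa [abs_mul, abs_pow, abs_of_pos hρ0] using hM j
  set s : ℝ → ℝ := fun r => (r ^ k - 1) ^ ((1 : ℝ) / k) with hsdef
  set E : ℝ → ℝ := fun r =>
    ∑' i : ℕ, c (i + 1 + k) * (s r * x) ^ (i + 1 + k) / (r ^ (i + 1 + k) - 1) with hEdef
  -- the key identity and estimate, valid for `r` close enough to `1` from the right
  have key : ∀ r : ℝ, 1 < r → s r * |x| ≤ ρ / 2 →
      (∏' n : ℕ,
          (f (s r * x / r ^ (n + 1)) /
            ∏ i ∈ Finset.Ioo 0 k, Real.exp (c i * (s r * x / r ^ (n + 1)) ^ i)))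
        = Real.exp (c k * x ^ k + E r) ∧
      |E r| ≤ 2 * (M * |x| ^ (k + 1) / ρ ^ (k + 1)) * s r := by
    intro r hr1 hax
    have hr0 : 0 < r := lt_trans one_pos hr1
    have hrk1 : 1 < r ^ k := one_lt_pow₀ hr1 hk.ne'
    have hs0 : 0 < s r := Real.rpow_pos_of_pos (by linarith) _
    have hsk : s r ^ k = r ^ k - 1 := by
      rw [hsdef]
      rw [← Real.rpow_natCast ((r ^ k - 1) ^ ((1:ℝ)/k)) k, ← Real.rpow_mul (by linarith),
        one_div, inv_mul_cancel₀ (Nat.cast_ne_zero.2 hk.ne'), Real.rpow_one]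
    have hskpos : 0 < s r ^ k := pow_pos hs0 k
    set a : ℝ := s r * x with hadef
    have haρ : |a| ≤ ρ / 2 := by
      rw [hadef, abs_mul, abs_of_pos hs0]; exact hax
    have haeq : |a| = s r * |x| := by rw [hadef, abs_mul, abs_of_pos hs0]
    have haρ' : |a| / ρ ≤ 2⁻¹ := by
      rw [div_le_iff₀ hρ0]; linarith
    have hrpow : ∀ n : ℕ, 1 ≤ r ^ (n + 1) := fun n => one_le_pow₀ hr1.le
    have hrpow0 : ∀ n : ℕ, 0 < r ^ (n + 1) := fun n => pow_pos hr0 _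
    have htabs : ∀ n : ℕ, |a / r ^ (n + 1)| ≤ ρ / 2 := by
      intro n
      rw [abs_div, abs_of_pos (hrpow0 n)]
      exact le_trans (div_le_self (abs_nonneg _) (hrpow n)) haρ
    have htR : ∀ n : ℕ, |a / r ^ (n + 1)| < R := fun n =>
      lt_of_le_of_lt (htabs n) (by rw [hρdef]; linarith)
    -- each factor is `exp (∑' i, c (i+k) * t^(i+k))`
    have hfactor : ∀ n : ℕ,
        f (a / r ^ (n + 1)) /
            ∏ i ∈ Finset.Ioo 0 k, Real.exp (c i * (a / r ^ (n + 1)) ^ i)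
          = Real.exp (∑' i : ℕ, c (i + k) * (a / r ^ (n + 1)) ^ (i + k)) := by
      intro n
      set t : ℝ := a / r ^ (n + 1) with htdef
      have hIoo : ∑ i ∈ Finset.Ioo 0 k, c i * t ^ i
          = ∑ i ∈ Finset.range k, c i * t ^ i := by
        refine Finset.sum_subset ?_ ?_
        · intro i hi
          simp only [Finset.mem_Ioo] at hi
          exact Finset.mem_range.2 hi.2
        · intro i hi hni
          simp only [Finset.mem_range] at hi
          simp only [Finset.mem_Ioo] at hni
          have : i = 0 := by omega
          simp [this, hc0]
      have hkey := Summable.sum_add_tsum_nat_add (f := fun j => c j * t ^ j) k (hsum t (htR n))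
      rw [hf t (htR n), ← Real.exp_sum, ← Real.exp_sub]
      congr 1
      rw [hIoo]
      linarith [hkey]
    -- summability of the double family
    set F : ℕ × ℕ → ℝ := fun p => c (p.2 + k) * (a / r ^ (p.1 + 1)) ^ (p.2 + k) with hFdef
    have hbr0 : (0:ℝ) < (r ^ k)⁻¹ := by positivity
    have hbr1 : (r ^ k)⁻¹ < 1 := inv_lt_one_of_one_lt₀ hrk1
    have hgeo2 : Summable (fun i : ℕ => ((2:ℝ)⁻¹) ^ i) :=
      summable_geometric_of_lt_one (by norm_num) (by norm_num)
    have hmaj : Summable (fun p : ℕ × ℕ => ((r ^ k)⁻¹) ^ (p.1 + 1) * (M * (2⁻¹ : ℝ) ^ p.2)) := by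
      have h1 : Summable (fun n : ℕ => ((r ^ k)⁻¹) ^ (n + 1)) := by
        have := (summable_geometric_of_lt_one hbr0.le hbr1).mul_left ((r ^ k)⁻¹)
        apply this.congr
        intro n; rw [← pow_succ']
      have h2 : Summable (fun i : ℕ => M * (2⁻¹ : ℝ) ^ i) := hgeo2.mul_left M
      exact h1.mul_of_nonneg h2 (fun n => pow_nonneg hbr0.le _)
        (fun i => mul_nonneg hM0 (pow_nonneg (by norm_num) _))
    have hFbound : ∀ p : ℕ × ℕ, ‖F p‖ ≤ ((r ^ k)⁻¹) ^ (p.1 + 1) * (M * (2⁻¹ : ℝ) ^ p.2) := by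
      rintro ⟨n, i⟩
      have e1 : |a / r ^ (n + 1)| / ρ = (|a| / ρ) * (r ^ (n+1))⁻¹ := by
        rw [abs_div, abs_of_pos (hrpow0 n)]; ring
      have b1 : (|a| / ρ) ^ (i + k) ≤ (2⁻¹ : ℝ) ^ i := by
        calc (|a| / ρ) ^ (i + k) ≤ (2⁻¹ : ℝ) ^ (i + k) :=
              pow_le_pow_left₀ (by positivity) haρ' _
          _ ≤ (2⁻¹ : ℝ) ^ i :=
              pow_le_pow_of_le_one (by norm_num) (by norm_num) (Nat.le_add_right i k)
      have b2 : ((r ^ (n+1))⁻¹) ^ (i + k) ≤ ((r ^ k)⁻¹) ^ (n + 1) := by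
        rw [← inv_pow, ← inv_pow, ← pow_mul, ← pow_mul]
        refine pow_le_pow_of_le_one (by positivity) (inv_le_one_of_one_le₀ hr1.le) ?_
        calc k * (n + 1) ≤ k * (n + 1) + i * (n + 1) := Nat.le_add_right _ _
          _ = (n + 1) * (i + k) := by ring
      have hb : (|a / r ^ (n + 1)| / ρ) ^ (i + k)
          ≤ (2⁻¹ : ℝ) ^ i * ((r ^ k)⁻¹) ^ (n + 1) := by
        rw [e1, mul_pow]
        exact mul_le_mul b1 b2 (by positivity) (by positivity)
      calc ‖F (n, i)‖ = |c (i + k)| * |a / r ^ (n + 1)| ^ (i + k) := by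
            rw [Real.norm_eq_abs, hFdef]; rw [abs_mul, abs_pow]
        _ ≤ (M / ρ ^ (i + k)) * |a / r ^ (n + 1)| ^ (i + k) :=
            mul_le_mul_of_nonneg_right (hMc _) (by positivity)
        _ = M * (|a / r ^ (n + 1)| / ρ) ^ (i + k) := by
            rw [div_pow (|a / r ^ (n + 1)|) ρ, div_mul_eq_mul_div, mul_div_assoc]
        _ ≤ M * ((2⁻¹ : ℝ) ^ i * ((r ^ k)⁻¹) ^ (n + 1)) :=
            mul_le_mul_of_nonneg_left hb hM0
        _ = ((r ^ k)⁻¹) ^ (n + 1) * (M * (2⁻¹ : ℝ) ^ i) := by ring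
    have hFs : Summable F :=
      Summable.of_norm (Summable.of_nonneg_of_le (fun p => norm_nonneg _) hFbound hmaj)
    have hrow : ∀ n : ℕ, Summable (fun i => F (n, i)) := fun n => hFs.prod_factor n
    have hu : HasSum (fun n => ∑' i, F (n, i)) (∑' p, F p) :=
      hFs.hasSum.prod_fiberwise fun n => (hrow n).hasSum
    -- column (geometric) sums
    have hGi : ∀ i : ℕ, HasSum (fun n => F (n, i))
        (c (i + k) * a ^ (i + k) / (r ^ (i + k) - 1)) := by
      intro i
      have hrj : 1 < r ^ (i + k) := one_lt_pow₀ hr1 (by omega)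
      have hrjne : (r : ℝ) ^ (i + k) ≠ 0 := by positivity
      have hrj1ne : r ^ (i + k) - 1 ≠ 0 := ne_of_gt (by linarith)
      have hy1 : (r ^ (i + k))⁻¹ < 1 := inv_lt_one_of_one_lt₀ hrj
      have h := (hasSum_geometric_of_lt_one (by positivity) hy1).mul_left
        (c (i + k) * a ^ (i + k) * (r ^ (i + k))⁻¹)
      have hfun : (fun n : ℕ => c (i + k) * a ^ (i + k) * (r ^ (i + k))⁻¹ * ((r ^ (i + k))⁻¹) ^ n)
          = fun n : ℕ => F (n, i) := by
        funext n
        show _ = c (i + k) * (a / r ^ (n + 1)) ^ (i + k)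
        rw [div_pow, pow_right_comm, div_eq_mul_inv, ← inv_pow, pow_succ']
        ring
      have hval : c (i + k) * a ^ (i + k) * (r ^ (i + k))⁻¹ * (1 - (r ^ (i + k))⁻¹)⁻¹
          = c (i + k) * a ^ (i + k) / (r ^ (i + k) - 1) := by
        have h1 : 1 - (r ^ (i + k))⁻¹ ≠ 0 := by
          have : (r ^ (i + k))⁻¹ < 1 := hy1
          intro hcon; rw [sub_eq_zero] at hcon; rw [← hcon] at this; exact lt_irrefl _ this
        field_simp
      rw [hfun, hval] at h
      exact h
    have hGsum : HasSum (fun i => c (i + k) * a ^ (i + k) / (r ^ (i + k) - 1)) (∑' p, F p) := by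
      have h1 : HasSum (fun q : ℕ × ℕ => F q.swap) (∑' p, F p) := by
        have h2 := hFs.prod_symm.hasSum
        have h3 : ∑' q : ℕ × ℕ, F q.swap = ∑' p, F p := by
          simpa using (Equiv.prodComm ℕ ℕ).tsum_eq F
        rwa [h3] at h2
      exact h1.prod_fiberwise fun i => hGi i
    have hG : Summable (fun i => c (i + k) * a ^ (i + k) / (r ^ (i + k) - 1)) := hGsum.summable
    -- split off the first term
    have hsplit : ∑' p, F p = c k * x ^ k + E r := by
      rw [← hGsum.tsum_eq, Summable.tsum_eq_zero_add hG]
      congr 1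
      · simp only [zero_add]
        rw [hadef, mul_pow, ← hsk, mul_div_assoc, mul_comm (s r ^ k) (x ^ k), mul_div_assoc,
          div_self (ne_of_gt hskpos), mul_one]
    constructor
    · -- the product identity
      have htp : (∏' n : ℕ,
          (f (a / r ^ (n + 1)) /
            ∏ i ∈ Finset.Ioo 0 k, Real.exp (c i * (a / r ^ (n + 1)) ^ i)))
          = Real.exp (∑' p, F p) := by
        calc (∏' n : ℕ,
            (f (a / r ^ (n + 1)) /
              ∏ i ∈ Finset.Ioo 0 k, Real.exp (c i * (a / r ^ (n + 1)) ^ i)))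
            = ∏' n : ℕ, Real.exp (∑' i : ℕ, c (i + k) * (a / r ^ (n + 1)) ^ (i + k)) :=
              tprod_congr hfactor
          _ = Real.exp (∑' p, F p) := hu.rexp.tprod_eq
      rw [htp, hsplit]
    · -- the estimate for `E r`
      set C : ℝ := M * |x| ^ (k + 1) / ρ ^ (k + 1) * s r with hCdef
      have hC0 : 0 ≤ C := by rw [hCdef]; positivity
      have hterm : ∀ i : ℕ,
          |c (i + 1 + k) * a ^ (i + 1 + k) / (r ^ (i + 1 + k) - 1)| ≤ (2⁻¹ : ℝ) ^ i * C := by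
        intro i
        have hj : 1 < r ^ (i + 1 + k) := one_lt_pow₀ hr1 (by omega)
        have hden : s r ^ k ≤ r ^ (i + 1 + k) - 1 := by
          rw [hsk]
          have : r ^ k ≤ r ^ (i + 1 + k) := pow_le_pow_right₀ hr1.le (by omega)
          linarith
        have e0 : |c (i + 1 + k) * a ^ (i + 1 + k) / (r ^ (i + 1 + k) - 1)|
            = |c (i + 1 + k)| * |a| ^ (i + 1 + k) / (r ^ (i + 1 + k) - 1) := by
          rw [abs_div, abs_of_pos (by linarith : (0:ℝ) < r ^ (i + 1 + k) - 1), abs_mul, abs_pow]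
        rw [e0]
        have step1 : |c (i + 1 + k)| * |a| ^ (i + 1 + k) / (r ^ (i + 1 + k) - 1)
            ≤ M / ρ ^ (i + 1 + k) * |a| ^ (i + 1 + k) / s r ^ k := by
          refine div_le_div₀ (by positivity) ?_ hskpos hden
          exact mul_le_mul_of_nonneg_right (hMc _) (by positivity)
        refine le_trans step1 ?_
        have e2 : M / ρ ^ (i + 1 + k) * |a| ^ (i + 1 + k) / s r ^ k
            = M * (|a| / ρ) ^ (i + 1 + k) / s r ^ k := by
          rw [div_pow (|a|) ρ, div_mul_eq_mul_div, mul_div_assoc]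
        rw [e2]
        have e3 : (|a| / ρ) ^ (i + 1 + k) = (|a| / ρ) ^ i * (|a| / ρ) ^ (k + 1) := by
          rw [← pow_add]; congr 1; omega
        have b3 : (|a| / ρ) ^ i ≤ (2⁻¹ : ℝ) ^ i := pow_le_pow_left₀ (by positivity) haρ' i
        have e4 : (|a| / ρ) ^ (k + 1) / s r ^ k = |x| ^ (k + 1) / ρ ^ (k + 1) * s r := by
          rw [haeq, div_pow, mul_pow, pow_succ (s r) k]
          field_simp
        calc M * (|a| / ρ) ^ (i + 1 + k) / s r ^ k
            = M * ((|a| / ρ) ^ i * ((|a| / ρ) ^ (k + 1) / s r ^ k)) := by rw [e3]; ring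
          _ = M * ((|a| / ρ) ^ i * (|x| ^ (k + 1) / ρ ^ (k + 1) * s r)) := by rw [e4]
          _ ≤ M * ((2⁻¹ : ℝ) ^ i * (|x| ^ (k + 1) / ρ ^ (k + 1) * s r)) := by
              refine mul_le_mul_of_nonneg_left ?_ hM0
              refine mul_le_mul_of_nonneg_right b3 (by positivity)
          _ = (2⁻¹ : ℝ) ^ i * C := by rw [hCdef]; ring
      have hEeq : E r = ∑' i : ℕ, c (i + 1 + k) * a ^ (i + 1 + k) / (r ^ (i + 1 + k) - 1) := by
        rw [hEdef]
      have hsum2 : Summable (fun i : ℕ => (2⁻¹ : ℝ) ^ i * C) := hgeo2.mul_right C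
      have habs_sum : Summable
          (fun i : ℕ => ‖c (i + 1 + k) * a ^ (i + 1 + k) / (r ^ (i + 1 + k) - 1)‖) := by
        refine Summable.of_nonneg_of_le (fun i => norm_nonneg _) ?_ hsum2
        intro i; rw [Real.norm_eq_abs]; exact hterm i
      have hgeo2sum : ∑' i : ℕ, (2⁻¹ : ℝ) ^ i = 2 := by
        rw [show ((2:ℝ))⁻¹ = 1/2 by norm_num]
        exact tsum_geometric_two
      calc |E r| = ‖∑' i : ℕ, c (i + 1 + k) * a ^ (i + 1 + k) / (r ^ (i + 1 + k) - 1)‖ := by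
            rw [hEeq, Real.norm_eq_abs]
        _ ≤ ∑' i : ℕ, ‖c (i + 1 + k) * a ^ (i + 1 + k) / (r ^ (i + 1 + k) - 1)‖ :=
            norm_tsum_le_tsum_norm habs_sum
        _ ≤ ∑' i : ℕ, (2⁻¹ : ℝ) ^ i * C := by
            refine Summable.tsum_le_tsum ?_ habs_sum hsum2
            intro i; rw [Real.norm_eq_abs]; exact hterm i
        _ = 2 * (M * |x| ^ (k + 1) / ρ ^ (k + 1)) * s r := by
            rw [tsum_mul_right, hgeo2sum, hCdef]; ring
  -- assemble the limit
  have hs_tendsto : Tendsto s (𝓝[>] (1:ℝ)) (𝓝 0) := by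
    have h1 : Tendsto (fun r : ℝ => r ^ k - 1) (𝓝[>] (1:ℝ)) (𝓝 0) := by
      have h2 : Tendsto (fun r : ℝ => r ^ k - 1) (𝓝 (1:ℝ)) (𝓝 0) :=
        ((continuous_pow k).sub continuous_const).tendsto' 1 0 (by simp)
      exact h2.mono_left nhdsWithin_le_nhds
    have h2 : Tendsto (fun y : ℝ => y ^ ((1:ℝ)/k)) (𝓝 0) (𝓝 0) := by
      have hc := Real.continuousAt_rpow_const 0 ((1:ℝ)/k) (Or.inr (by positivity))
      have h0 : (0:ℝ) ^ ((1:ℝ)/k) = 0 := by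
        refine Real.zero_rpow ?_
        have : (0:ℝ) < 1 / k := by
          have : (0:ℝ) < (k:ℝ) := Nat.cast_pos.2 hk
          positivity
        exact ne_of_gt this
      have := hc.tendsto
      rwa [h0] at this
    exact h2.comp h1
  have hx_ev : ∀ᶠ r in 𝓝[>] (1:ℝ), 1 < r ∧ s r * |x| ≤ ρ / 2 := by
    have h1 : ∀ᶠ r in 𝓝[>] (1:ℝ), s r * |x| < ρ / 2 := by
      have h2 : Tendsto (fun r => s r * |x|) (𝓝[>] (1:ℝ)) (𝓝 0) := by
        simpa only [zero_mul] using hs_tendsto.mul_const |x|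
      exact h2.eventually_lt_const (by positivity)
    filter_upwards [self_mem_nhdsWithin, h1] with r hr h2
    exact ⟨hr, h2.le⟩
  have hE0 : Tendsto E (𝓝[>] (1:ℝ)) (𝓝 0) := by
    refine squeeze_zero_norm'
      (a := fun r => 2 * (M * |x| ^ (k + 1) / ρ ^ (k + 1)) * s r) ?_ ?_
    · filter_upwards [hx_ev] with r hr
      rw [Real.norm_eq_abs]
      exact (key r hr.1 hr.2).2
    · have := hs_tendsto.const_mul (2 * (M * |x| ^ (k + 1) / ρ ^ (k + 1)))
      simpa only [mul_zero] using this
  have hmain : Tendsto (fun r => Real.exp (c k * x ^ k + E r)) (𝓝[>] (1:ℝ))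
      (𝓝 (Real.exp (c k * x ^ k))) := by
    have h1 : Tendsto (fun r => c k * x ^ k + E r) (𝓝[>] (1:ℝ)) (𝓝 (c k * x ^ k)) := by
      have := hE0.const_add (c k * x ^ k)
      simpa only [add_zero] using this
    exact (Real.continuous_exp.tendsto _).comp h1
  refine hmain.congr' ?_
  filter_upwards [hx_ev] with r hr
  exact ((key r hr.1 hr.2).1).symm
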